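/- Let G be an α-regular finite simple graph whose girth is finite and equal to g (so g ≥ 3), and let k be an integer with 1 ≤ k ≤ α. If k ≤ g − 1 then M_G(k) = k·α − k + 1, and if g ≤ k ≤ g + ⌈g/2⌉ − 2 then M_G(k) = k·α − k. -/

import Mathlib

open SimpleGraph

/-- The number of edges of `G` incident to at least one vertex of `S`. -/
noncomputable def incidentEdgeCount {V : Type*} (G : SimpleGraph V) (S : Finset V) : ℕ :=
  {e ∈ G.edgeSet | ∃ v ∈ S, v ∈ e}.ncard

/-- `fileSize G k` is the minimum, over all `k`-element vertex sets `S`, of the number of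
edges of `G` incident to at least one vertex of `S`. -/
noncomputable def fileSize {V : Type*} (G : SimpleGraph V) (k : ℕ) : ℕ :=
  sInf { m | ∃ S : Finset V, S.card = k ∧ m = incidentEdgeCount G S }
set_option linter.unusedSectionVars false

namespace FRC

variable {V : Type*} [Fintype V] [DecidableEq V] (G : SimpleGraph V) [DecidableRel G.Adj]

def insideF (S : Finset V) : Finset (Sym2 V) :=
  G.edgeFinset.filter (fun e => ∀ v ∈ e, v ∈ S)

lemma sym2_other {e : Sym2 V} (he : e ∈ G.edgeFinset) {v : V} (hv : v ∈ e) :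
    ∃ w, e = s(v, w) ∧ G.Adj v w := by
  obtain ⟨w, rfl⟩ := Sym2.mem_iff_exists.mp hv
  exact ⟨w, rfl, (mem_edgeFinset.mp he : s(v,w) ∈ G.edgeSet)⟩

def degIn (D : Finset (Sym2 V)) (v : V) : ℕ := (D.filter (fun e => v ∈ e)).card

/-- In a walk with no repeated vertices, there is at most one edge at the start vertex. -/
lemma start_edge_unique {u w : V} (p : G.Walk u w) (hnd : p.support.Nodup)
    {y y' : V} (hy : s(u, y) ∈ p.edges) (hy' : s(u, y') ∈ p.edges) : y = y' := by
  induction p with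
  | nil => simp at hy
  | @cons a b c hadj q ih =>
    simp only [Walk.edges_cons, List.mem_cons] at hy hy'
    simp only [Walk.support_cons, List.nodup_cons] at hnd
    have key : ∀ z : V, s(a, z) ∈ q.edges → False := by
      intro z hz
      exact hnd.1 (q.fst_mem_support_of_mem_edges hz)
    have hb : ∀ z : V, s(a, z) = s(a, b) → z = b := by
      intro z hzb
      rcases Sym2.eq_iff.mp hzb with ⟨_, h2⟩ | ⟨h1, h2⟩
      · exact h2
      · exact absurd h1.symm hadj.ne'
    rcases hy with h1 | h1
    · rcases hy' with h2 | h2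
      · rw [hb y h1, hb y' h2]
      · exact absurd h2 (key y')
    · exact absurd h1 (key y)

/-- From a walk of positive length ending at `v`, get an edge of the walk at `v`. -/
lemma exists_end_edge {u v : V} (p : G.Walk u v) (hnil : ¬ p.Nil) :
    ∃ z, s(v, z) ∈ p.edges := by
  have hnil' : ¬ p.reverse.Nil := by
    rwa [Walk.nil_iff_length_eq, Walk.length_reverse, ← Walk.nil_iff_length_eq]
  obtain ⟨z, hadj, q, hq⟩ := Walk.not_nil_iff.mp hnil'
  refine ⟨z, ?_⟩
  have : s(v, z) ∈ p.reverse.edges := by rw [hq]; simp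
  rwa [Walk.edges_reverse, List.mem_reverse] at this

lemma exists_cycle_of_min_degree_two (D : Finset (Sym2 V)) (hD : D ⊆ G.edgeFinset)
    (hne : D.Nonempty) (hdeg : ∀ v e, e ∈ D → v ∈ e → 2 ≤ degIn D v) :
    ∃ (u : V) (c : G.Walk u u), c.IsCycle ∧ ∀ e ∈ c.edges, e ∈ D := by
  have key : ∀ n : ℕ, 1 ≤ n →
      (∃ (u v : V) (p : G.Walk u v), p.support.Nodup ∧ p.length = n ∧ ∀ e ∈ p.edges, e ∈ D)
      ∨ (∃ (u : V) (c : G.Walk u u), c.IsCycle ∧ ∀ e ∈ c.edges, e ∈ D) := by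
    intro n
    induction n with
    | zero => omega
    | succ n ih =>
      intro _
      by_cases hn : 1 ≤ n
      · rcases ih hn with ⟨u, v, p, hnd, hlen, hed⟩ | hcyc
        · -- extend the path p
          have hnil : ¬ p.Nil := by
            rw [Walk.nil_iff_length_eq]; omega
          obtain ⟨z, hz⟩ := exists_end_edge G p hnil
          have hzD : s(v, z) ∈ D := hed _ hz
          have hdeg2 : 2 ≤ degIn D v := hdeg v _ hzD (by simp)
          obtain ⟨e1, he1, e2, he2, he12⟩ := Finset.one_lt_card.mp hdeg2
          simp only [Finset.mem_filter] at he1 he2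
          obtain ⟨y1, rfl, hady1⟩ := sym2_other G (hD he1.1) he1.2
          obtain ⟨y2, rfl, hady2⟩ := sym2_other G (hD he2.1) he2.2
          have hy12 : y1 ≠ y2 := fun h => he12 (by rw [h])
          -- at most one of y1, y2 can be the edge of p at v
          have huniq : ∀ (a b : V), s(v, a) ∈ p.edges → s(v, b) ∈ p.edges → a = b := by
            intro a b ha hb
            have hnd' : p.reverse.support.Nodup := by
              rw [Walk.support_reverse]; rwa [List.nodup_reverse]
            have ha' : s(v, a) ∈ p.reverse.edges := by
              rw [Walk.edges_reverse, List.mem_reverse]; exact ha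
            have hb' : s(v, b) ∈ p.reverse.edges := by
              rw [Walk.edges_reverse, List.mem_reverse]; exact hb
            exact start_edge_unique G p.reverse hnd' ha' hb'
          have hchoice : ∃ w, s(v, w) ∈ D ∧ G.Adj v w ∧ s(v, w) ∉ p.edges := by
            by_cases h1 : s(v, y1) ∈ p.edges
            · refine ⟨y2, he2.1, hady2, fun h2 => hy12 (huniq _ _ h1 h2)⟩
            · exact ⟨y1, he1.1, hady1, h1⟩
          obtain ⟨w, hwD, hadw, hwp⟩ := hchoice
          by_cases hws : w ∈ p.support
          · -- found a cycle
            right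
            have hpath : p.IsPath := (Walk.isPath_def p).mpr hnd
            have hq : (p.dropUntil w hws).IsPath := hpath.dropUntil hws
            refine ⟨v, Walk.cons hadw (p.dropUntil w hws), ?_, ?_⟩
            · rw [Walk.cons_isCycle_iff]
              refine ⟨hq, fun hmem => hwp (Walk.edges_dropUntil_subset p hws hmem)⟩
            · intro e he
              simp only [Walk.edges_cons, List.mem_cons] at he
              rcases he with rfl | he
              · exact hwD
              · exact hed _ (Walk.edges_dropUntil_subset p hws he)
          · -- extend
            left
            refine ⟨u, w, p.concat hadw, ?_, ?_, ?_⟩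
            · rw [Walk.support_concat]
              have := List.Nodup.concat hws hnd
              rwa [List.concat_eq_append] at this
            · rw [Walk.length_concat]; omega
            · intro e he
              rw [Walk.edges_concat] at he
              rw [List.concat_eq_append, List.mem_append] at he
              rcases he with he | he
              · exact hed _ he
              · simp at he
                subst he
                exact hwD
        · exact Or.inr hcyc
      · -- n = 0 : build a length-1 walk from an edge of D
        left
        obtain ⟨e, he⟩ := hne
        have heE := hD he
        have : ∃ a b : V, e = s(a, b) ∧ G.Adj a b := by
          induction e with
          | _ a b => exact ⟨a, b, rfl, mem_edgeFinset.mp heE⟩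
        obtain ⟨a, b, rfl, hab⟩ := this
        refine ⟨a, b, Walk.cons hab Walk.nil, by simp [hab.ne], by simp; omega, ?_⟩
        intro e' he'
        simp at he'
        subst he'
        exact he
  rcases key (max 1 (Fintype.card V)) (le_max_left _ _) with ⟨u, v, p, hnd, hlen, _⟩ | hcyc
  · exfalso
    have h1 : p.support.length ≤ Fintype.card V := hnd.length_le_card
    have h2 : p.support.length = p.length + 1 := p.length_support
    have := le_max_right 1 (Fintype.card V)
    omega
  · exact hcyc

lemma exists_cycle_edges_subset (D : Finset (Sym2 V)) (hD : D ⊆ G.edgeFinset)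
    (hne : D.Nonempty)
    (hcard : (Finset.univ.filter (fun v => ∃ e ∈ D, v ∈ e)).card ≤ D.card) :
    ∃ (u : V) (c : G.Walk u u), c.IsCycle ∧ ∀ e ∈ c.edges, e ∈ D := by
  suffices H : ∀ (n : ℕ) (D : Finset (Sym2 V)), D.card = n → D ⊆ G.edgeFinset → D.Nonempty →
      (Finset.univ.filter (fun v => ∃ e ∈ D, v ∈ e)).card ≤ D.card →
      ∃ (u : V) (c : G.Walk u u), c.IsCycle ∧ ∀ e ∈ c.edges, e ∈ D by
    exact H D.card D rfl hD hne hcard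
  intro n
  induction n using Nat.strong_induction_on with
  | _ n ih =>
    intro D hcardn hD hne hcard
    set T := Finset.univ.filter (fun v => ∃ e ∈ D, v ∈ e) with hT
    by_cases hdeg1 : ∃ v ∈ T, degIn D v = 1
    · -- trim the degree-one vertex
      obtain ⟨v, hvT, hv1⟩ := hdeg1
      obtain ⟨e, he⟩ := Finset.card_eq_one.mp hv1
      have heD : e ∈ D ∧ v ∈ e := by
        have : e ∈ D.filter (fun e => v ∈ e) := by rw [he]; simp
        simpa using this
      have huniq : ∀ e' ∈ D, v ∈ e' → e' = e := by
        intro e' he' hve'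
        have : e' ∈ D.filter (fun e => v ∈ e) := Finset.mem_filter.mpr ⟨he', hve'⟩
        rw [he] at this
        simpa using this
      set D' := D.erase e with hD'
      have hcard' : D'.card = D.card - 1 := Finset.card_erase_of_mem heD.1
      have hDpos : 1 ≤ D.card := Finset.card_pos.mpr hne
      have hne' : D'.Nonempty := by
        rw [← Finset.card_pos, hcard']
        by_contra h
        -- then D = {e}
        have hcard1 : D.card = 1 := by omega
        obtain ⟨f, hf⟩ := Finset.card_eq_one.mp hcard1
        obtain ⟨a, b, hab, hadj⟩ : ∃ a b : V, e = s(a, b) ∧ G.Adj a b := by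
          have heE := hD heD.1
          induction e with
          | _ a b => exact ⟨a, b, rfl, mem_edgeFinset.mp heE⟩
        have haT : a ∈ T := by
          rw [hT]
          simp only [Finset.mem_filter, Finset.mem_univ, true_and]
          exact ⟨e, heD.1, by rw [hab]; simp⟩
        have hbT : b ∈ T := by
          rw [hT]
          simp only [Finset.mem_filter, Finset.mem_univ, true_and]
          exact ⟨e, heD.1, by rw [hab]; simp⟩
        have h2 : 2 ≤ T.card := by
          have : ({a, b} : Finset V) ⊆ T := by
            intro x hx
            rcases Finset.mem_insert.mp hx with rfl | hx
            · exact haT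
            · rw [Finset.mem_singleton.mp hx]; exact hbT
          calc 2 = ({a, b} : Finset V).card := (Finset.card_pair hadj.ne).symm
            _ ≤ T.card := Finset.card_le_card this
        omega
      have hsub : (Finset.univ.filter (fun v => ∃ e ∈ D', v ∈ e)) ⊆ T.erase v := by
        intro x hx
        simp only [Finset.mem_filter, Finset.mem_univ, true_and] at hx
        obtain ⟨e', he', hxe'⟩ := hx
        have he'D : e' ∈ D := Finset.mem_of_mem_erase he'
        refine Finset.mem_erase.mpr ⟨?_, ?_⟩
        · rintro rfl
          exact (Finset.ne_of_mem_erase he') (huniq e' he'D hxe')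
        · rw [hT]
          simp only [Finset.mem_filter, Finset.mem_univ, true_and]
          exact ⟨e', he'D, hxe'⟩
      have hvTcard : 1 ≤ T.card := Finset.card_pos.mpr ⟨v, hvT⟩
      have hcard2 : (Finset.univ.filter (fun v => ∃ e ∈ D', v ∈ e)).card ≤ D'.card := by
        calc (Finset.univ.filter (fun v => ∃ e ∈ D', v ∈ e)).card
            ≤ (T.erase v).card := Finset.card_le_card hsub
          _ = T.card - 1 := Finset.card_erase_of_mem hvT
          _ ≤ D.card - 1 := by omega
          _ = D'.card := hcard'.symm
      obtain ⟨u, c, hc, hce⟩ := ih (n - 1) (by omega) D' (by omega) 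
        (fun x hx => hD (Finset.mem_of_mem_erase hx)) hne' hcard2
      exact ⟨u, c, hc, fun e' he' => Finset.mem_of_mem_erase (hce e' he')⟩
    · -- min degree 2
      push_neg at hdeg1
      apply exists_cycle_of_min_degree_two G D hD hne
      intro v e heD hve
      have hvT : v ∈ T := by
        rw [hT]
        simp only [Finset.mem_filter, Finset.mem_univ, true_and]
        exact ⟨e, heD, hve⟩
      have h1 : 1 ≤ degIn D v := by
        have : 0 < (D.filter (fun e => v ∈ e)).card := Finset.card_pos.mpr ⟨e, Finset.mem_filter.mpr ⟨heD, hve⟩⟩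
        unfold degIn
        omega
      have := hdeg1 v hvT
      omega

lemma exists_edge_of_mem_support {a b x : V} (p : G.Walk a b) (hx : x ∈ p.support) :
    x = b ∨ ∃ e ∈ p.edges, x ∈ e := by
  induction p with
  | nil => simp at hx; exact Or.inl hx
  | @cons u v w h q ih =>
    rw [Walk.support_cons, List.mem_cons] at hx
    rcases hx with rfl | hx
    · exact Or.inr ⟨s(x, v), by simp, by simp⟩
    · rcases ih hx with rfl | ⟨e, he, hxe⟩
      · exact Or.inl rfl
      · exact Or.inr ⟨e, by simp [he], hxe⟩

lemma cycle_mem_edge_of_mem_support {u x : V} {c : G.Walk u u} (hc : c.IsCycle)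
    (hx : x ∈ c.support) : ∃ e ∈ c.edges, x ∈ e := by
  rcases exists_edge_of_mem_support G c hx with rfl | h
  · obtain ⟨z, hadj, q, hq⟩ := Walk.not_nil_iff.mp hc.not_nil
    exact ⟨s(x, z), by rw [hq]; simp, by simp⟩
  · exact h

lemma cycle_length_le_of_edges_subset {u : V} {c : G.Walk u u} (hc : c.IsCycle)
    {S : Finset V} (h : ∀ e ∈ c.edges, e ∈ insideF G S) : c.length ≤ S.card := by
  have hsub : c.support.tail.toFinset ⊆ S := by
    intro x hx
    rw [List.mem_toFinset] at hx
    have hxs : x ∈ c.support := List.mem_of_mem_tail hx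
    obtain ⟨e, he, hxe⟩ := cycle_mem_edge_of_mem_support G hc hxs
    have := h e he
    rw [insideF, Finset.mem_filter] at this
    exact this.2 x hxe
  calc c.length = c.support.tail.length := by
        have := c.length_support
        simp only [List.length_tail, this]
        omega
    _ = c.support.tail.toFinset.card := (List.toFinset_card_of_nodup hc.support_nodup).symm
    _ ≤ S.card := Finset.card_le_card hsub

lemma cycle_card_edges {u : V} {c : G.Walk u u} (hc : c.IsCycle) :
    c.edges.toFinset.card = c.length := by
  rw [List.toFinset_card_of_nodup hc.isCircuit.isTrail.edges_nodup, Walk.length_edges]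

lemma card_filter_mem_eq_two {e : Sym2 V} (he : e ∈ G.edgeFinset) :
    (Finset.univ.filter (fun v => v ∈ e)).card = 2 := by
  induction e with
  | _ a b =>
    have hab : G.Adj a b := mem_edgeFinset.mp he
    have : Finset.univ.filter (fun v => v ∈ s(a,b)) = {a, b} := by
      ext x; simp [Sym2.mem_iff]
    rw [this, Finset.card_pair hab.ne]

lemma handshake {D : Finset (Sym2 V)} (hD : D ⊆ G.edgeFinset) :
    ∑ v, degIn D v = 2 * D.card := by
  unfold degIn
  simp_rw [Finset.card_filter]
  rw [Finset.sum_comm]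
  have : ∀ e ∈ D, (∑ v, if v ∈ e then 1 else 0) = 2 := by
    intro e he
    rw [← Finset.card_filter]
    exact card_filter_mem_eq_two G (hD he)
  rw [Finset.sum_congr rfl this]
  simp [mul_comm]

lemma even_degIn_cycle {u : V} {c : G.Walk u u} (hc : c.IsCycle) (v : V) :
    Even (degIn (c.edges.toFinset) v) := by
  have h1 : degIn (c.edges.toFinset) v = c.edges.countP (fun e => v ∈ e) := by
    unfold degIn
    rw [List.countP_eq_length_filter]
    rw [← List.toFinset_card_of_nodup ((hc.isCircuit.isTrail.edges_nodup).filter _)]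
    congr 1
    ext e
    simp [List.mem_filter]
  rw [h1]
  have := (hc.isCircuit.isTrail.even_countP_edges_iff v).mpr (fun h => absurd rfl h)
  convert this using 2

lemma even_degIn_symmDiff {E1 E2 : Finset (Sym2 V)} {v : V}
    (h1 : Even (degIn E1 v)) (h2 : Even (degIn E2 v)) :
    Even (degIn (symmDiff E1 E2) v) := by
  have hfil : (symmDiff E1 E2).filter (fun e => v ∈ e)
      = symmDiff (E1.filter (fun e => v ∈ e)) (E2.filter (fun e => v ∈ e)) := by
    ext x
    simp only [Finset.mem_symmDiff, Finset.mem_filter]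
    tauto
  unfold degIn at *
  rw [hfil]
  set A := E1.filter (fun e => v ∈ e)
  set B := E2.filter (fun e => v ∈ e)
  have hd : symmDiff A B = (A ∪ B) \ (A ∩ B) := by
    rw [symmDiff_eq_sup_sdiff_inf]; rfl
  have hsub : A ∩ B ⊆ A ∪ B := (Finset.inter_subset_left).trans Finset.subset_union_left
  have hcard : (symmDiff A B).card = (A ∪ B).card - (A ∩ B).card := by
    rw [hd, Finset.card_sdiff_of_subset hsub]
  have huai : (A ∪ B).card + (A ∩ B).card = A.card + B.card := Finset.card_union_add_card_inter A B
  have hile : (A ∩ B).card ≤ (A ∪ B).card := Finset.card_le_card hsub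
  rw [Nat.even_iff] at *
  omega

/-- Upper bound in the regime `|S| < g`. -/
lemma inside_lt_of_lt_girth {g : ℕ}
    (hgirth : ∀ (u : V) (c : G.Walk u u), c.IsCycle → g ≤ c.length)
    {S : Finset V} (h1 : 1 ≤ S.card) (h2 : S.card < g) :
    (insideF G S).card < S.card := by
  by_contra h
  push_neg at h
  have hD : insideF G S ⊆ G.edgeFinset := Finset.filter_subset _ _
  have hne : (insideF G S).Nonempty := Finset.card_pos.mp (by omega)
  have hTs : (Finset.univ.filter (fun v => ∃ e ∈ insideF G S, v ∈ e)) ⊆ S := by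
    intro x hx
    simp only [Finset.mem_filter, Finset.mem_univ, true_and] at hx
    obtain ⟨e, he, hxe⟩ := hx
    rw [insideF, Finset.mem_filter] at he
    exact he.2 x hxe
  obtain ⟨u, c, hc, hce⟩ := exists_cycle_edges_subset G _ hD hne
    (le_trans (Finset.card_le_card hTs) h)
  have hlen : c.length ≤ S.card := cycle_length_le_of_edges_subset G hc hce
  have := hgirth u c hc
  omega

/-- Upper bound in the second regime: if `|S| + 1` inside edges exist then `3g ≤ 2(|S|+1)`. -/
lemma three_mul_girth_le {g : ℕ}
    (hgirth : ∀ (u : V) (c : G.Walk u u), c.IsCycle → g ≤ c.length)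
    {S : Finset V} (h1 : 1 ≤ S.card) (hS : S.card + 1 ≤ (insideF G S).card) :
    3 * g ≤ 2 * (S.card + 1) := by
  obtain ⟨D0, hD0sub, hD0card⟩ := Finset.exists_subset_card_eq hS
  have hD0E : D0 ⊆ G.edgeFinset := hD0sub.trans (Finset.filter_subset _ _)
  have hTsub : ∀ (D : Finset (Sym2 V)), D ⊆ D0 →
      (Finset.univ.filter (fun v => ∃ e ∈ D, v ∈ e)) ⊆ S := by
    intro D hD x hx
    simp only [Finset.mem_filter, Finset.mem_univ, true_and] at hx
    obtain ⟨e, he, hxe⟩ := hx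
    have := hD0sub (hD he)
    rw [insideF, Finset.mem_filter] at this
    exact this.2 x hxe
  -- first cycle
  obtain ⟨u1, c1, hc1, hc1e⟩ := exists_cycle_edges_subset G D0 hD0E
    (Finset.card_pos.mp (by omega))
    (le_trans (Finset.card_le_card (hTsub D0 (le_refl _))) (by omega))
  -- an edge of c1
  obtain ⟨z, hadj, q, hq⟩ := Walk.not_nil_iff.mp hc1.not_nil
  set e : Sym2 V := s(u1, z) with he_def
  have heD0 : e ∈ D0 := hc1e _ (by rw [hq]; simp [he_def])
  have heE1 : e ∈ c1.edges.toFinset := by rw [List.mem_toFinset, hq]; simp [he_def]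
  -- second cycle avoiding e
  have hD1E : D0.erase e ⊆ G.edgeFinset := (Finset.erase_subset _ _).trans hD0E
  have hD1card : (D0.erase e).card = S.card := by
    rw [Finset.card_erase_of_mem heD0, hD0card]
    omega
  obtain ⟨u2, c2, hc2, hc2e⟩ := exists_cycle_edges_subset G (D0.erase e) hD1E
    (Finset.card_pos.mp (by omega))
    (by
      refine le_trans (Finset.card_le_card (hTsub _ (Finset.erase_subset _ _))) ?_
      omega)
  set E1 := c1.edges.toFinset with hE1
  set E2 := c2.edges.toFinset with hE2
  have hE1D0 : E1 ⊆ D0 := by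
    intro x hx; rw [hE1, List.mem_toFinset] at hx; exact hc1e _ hx
  have hE2D0 : E2 ⊆ D0 := by
    intro x hx; rw [hE2, List.mem_toFinset] at hx
    exact Finset.mem_of_mem_erase (hc2e _ hx)
  have heE2 : e ∉ E2 := by
    intro hx
    rw [hE2, List.mem_toFinset] at hx
    exact Finset.notMem_erase e D0 (hc2e _ hx)
  set D := symmDiff E1 E2 with hDdef
  have hDD0 : D ⊆ D0 := by
    intro x hx
    rcases Finset.mem_symmDiff.mp hx with ⟨h, _⟩ | ⟨h, _⟩
    · exact hE1D0 h
    · exact hE2D0 h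
  have hDne : D.Nonempty := ⟨e, Finset.mem_symmDiff.mpr (Or.inl ⟨heE1, heE2⟩)⟩
  have hDE : D ⊆ G.edgeFinset := hDD0.trans hD0E
  -- every vertex meeting D has degree ≥ 2 in D
  have hdeg2 : ∀ x, (∃ e' ∈ D, x ∈ e') → 2 ≤ degIn D x := by
    rintro x ⟨e', he', hxe'⟩
    have heven : Even (degIn D x) :=
      even_degIn_symmDiff (even_degIn_cycle G hc1 x) (even_degIn_cycle G hc2 x)
    have hpos : 1 ≤ degIn D x := by
      have : 0 < (D.filter (fun e => x ∈ e)).card :=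
        Finset.card_pos.mpr ⟨e', Finset.mem_filter.mpr ⟨he', hxe'⟩⟩
      unfold degIn
      omega
    rcases heven with ⟨m, hm⟩
    omega
  -- |T_D| ≤ |D| via handshake
  have hhand : ∑ v, degIn D v = 2 * D.card := handshake G hDE
  have hTD : (Finset.univ.filter (fun v => ∃ e ∈ D, v ∈ e)).card ≤ D.card := by
    set T := Finset.univ.filter (fun v => ∃ e ∈ D, v ∈ e) with hT
    have hzero : ∀ v ∈ Finset.univ, v ∉ T → degIn D v = 0 := by
      intro v _ hv
      rw [hT] at hv
      simp only [Finset.mem_filter, Finset.mem_univ, true_and, not_exists, not_and] at hv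
      unfold degIn
      rw [Finset.card_eq_zero, Finset.filter_eq_empty_iff]
      intro e' he'
      exact hv e' he' 
    have hsum : ∑ v ∈ T, degIn D v = ∑ v, degIn D v :=
      Finset.sum_subset (Finset.subset_univ T) hzero
    have hge : 2 * T.card ≤ ∑ v ∈ T, degIn D v := by
      calc 2 * T.card = ∑ _v ∈ T, 2 := by rw [Finset.sum_const, smul_eq_mul, mul_comm]
        _ ≤ ∑ v ∈ T, degIn D v := by
            apply Finset.sum_le_sum
            intro v hv
            rw [hT] at hv
            simp only [Finset.mem_filter, Finset.mem_univ, true_and] at hv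
            exact hdeg2 v hv
    omega
  -- third cycle inside D
  obtain ⟨u3, c3, hc3, hc3e⟩ := exists_cycle_edges_subset G D hDE hDne hTD
  set E3 := c3.edges.toFinset with hE3
  have hE3D : E3 ⊆ D := by
    intro x hx; rw [hE3, List.mem_toFinset] at hx; exact hc3e _ hx
  -- counting
  have hl1 : E1.card = c1.length := cycle_card_edges G hc1
  have hl2 : E2.card = c2.length := cycle_card_edges G hc2
  have hl3 : E3.card = c3.length := cycle_card_edges G hc3
  have hg1 : g ≤ c1.length := hgirth _ _ hc1
  have hg2 : g ≤ c2.length := hgirth _ _ hc2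
  have hg3 : g ≤ c3.length := hgirth _ _ hc3
  have hunion : (E1 ∪ E2).card ≤ S.card + 1 := by
    rw [← hD0card]
    exact Finset.card_le_card (Finset.union_subset hE1D0 hE2D0)
  have huai : (E1 ∪ E2).card + (E1 ∩ E2).card = E1.card + E2.card :=
    Finset.card_union_add_card_inter E1 E2
  have hDcard : D.card = (E1 ∪ E2).card - (E1 ∩ E2).card := by
    have hd : D = (E1 ∪ E2) \ (E1 ∩ E2) := by
      rw [hDdef, symmDiff_eq_sup_sdiff_inf]; rfl
    rw [hd, Finset.card_sdiff_of_subset ((Finset.inter_subset_left).trans Finset.subset_union_left)]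
  have hile : (E1 ∩ E2).card ≤ (E1 ∪ E2).card :=
    Finset.card_le_card ((Finset.inter_subset_left).trans Finset.subset_union_left)
  have hE3card : E3.card ≤ D.card := Finset.card_le_card hE3D
  omega

/-- Greedy growth: enlarge a vertex set one vertex at a time, adding at least one
inside edge each step. Requires regularity with high enough degree. -/
lemma growth {α : ℕ} (hreg : G.IsRegularOfDegree α) :
    ∀ (m : ℕ) (S : Finset V), S.Nonempty → S.card + m ≤ α →
    ∃ S' : Finset V, S ⊆ S' ∧ S'.card = S.card + m ∧
      (insideF G S).card + m ≤ (insideF G S').card := by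
  intro m
  induction m with
  | zero => exact fun S hS _ => ⟨S, le_refl _, by omega, by omega⟩
  | succ m ih =>
    intro S hSne hcard
    obtain ⟨v, hv⟩ := hSne
    have hdeg : (G.neighborFinset v).card = α := by
      rw [G.card_neighborFinset_eq_degree]; exact hreg v
    have hout : ∃ w ∈ G.neighborFinset v, w ∉ S := by
      by_contra h
      push_neg at h
      have hsub : G.neighborFinset v ⊆ S.erase v := by
        intro w hw
        have hadj : G.Adj v w := by rwa [mem_neighborFinset] at hw
        exact Finset.mem_erase.mpr ⟨hadj.ne', h w hw⟩
      have := Finset.card_le_card hsub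
      rw [hdeg, Finset.card_erase_of_mem hv] at this
      omega
    obtain ⟨w, hwnb, hwS⟩ := hout
    have hadj : G.Adj v w := by rwa [mem_neighborFinset] at hwnb
    set S2 := insert w S with hS2
    have hS2card : S2.card = S.card + 1 := Finset.card_insert_of_notMem hwS
    have hmono : insideF G S ⊆ insideF G S2 := by
      intro e he
      rw [insideF, Finset.mem_filter] at he ⊢
      exact ⟨he.1, fun x hx => Finset.mem_insert_of_mem (he.2 x hx)⟩
    have hnew : s(v, w) ∈ insideF G S2 := by
      rw [insideF, Finset.mem_filter]
      refine ⟨mem_edgeFinset.mpr hadj, ?_⟩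
      intro x hx
      rcases Sym2.mem_iff.mp hx with rfl | rfl
      · exact Finset.mem_insert_of_mem hv
      · exact Finset.mem_insert_self _ _
    have hnotold : s(v, w) ∉ insideF G S := by
      rw [insideF, Finset.mem_filter]
      rintro ⟨-, h⟩
      exact hwS (h w (by simp))
    have hstep : (insideF G S).card + 1 ≤ (insideF G S2).card := by
      have : insert s(v, w) (insideF G S) ⊆ insideF G S2 := by
        intro x hx
        rcases Finset.mem_insert.mp hx with rfl | hx
        · exact hnew
        · exact hmono hx
      have h2 := Finset.card_le_card this
      rwa [Finset.card_insert_of_notMem hnotold] at h2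
    obtain ⟨S', hsub', hcard', hins'⟩ := ih S2 ⟨w, Finset.mem_insert_self _ _⟩ (by omega)
    exact ⟨S', (Finset.subset_insert _ _).trans hsub', by omega, by omega⟩

lemma closed_support_subset_tail {u x : V} {c : G.Walk u u} (hnil : ¬ c.Nil)
    (hx : x ∈ c.support) : x ∈ c.support.tail := by
  obtain ⟨z, hadj, q, hq⟩ := Walk.not_nil_iff.mp hnil
  subst hq
  rw [Walk.support_cons, List.tail_cons]
  rw [Walk.support_cons, List.mem_cons] at hx
  rcases hx with rfl | hx
  · exact q.end_mem_support
  · exact hx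

/-- The vertex set of a cycle has as many inside edges as its length. -/
lemma cycle_start_set {u : V} {c : G.Walk u u} (hc : c.IsCycle) :
    c.support.tail.toFinset.card = c.length ∧
      c.length ≤ (insideF G c.support.tail.toFinset).card := by
  have hcard : c.support.tail.toFinset.card = c.length := by
    rw [List.toFinset_card_of_nodup hc.support_nodup]
    have := c.length_support
    simp only [List.length_tail, this]
    omega
  refine ⟨hcard, ?_⟩
  have hsub : c.edges.toFinset ⊆ insideF G c.support.tail.toFinset := by
    intro e he
    rw [List.mem_toFinset] at he
    rw [insideF, Finset.mem_filter]
    refine ⟨mem_edgeFinset.mpr (c.edges_subset_edgeSet he), ?_⟩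
    intro x hx
    rw [List.mem_toFinset]
    apply closed_support_subset_tail G hc.not_nil
    obtain ⟨y, rfl⟩ := Sym2.mem_iff_exists.mp hx
    exact c.fst_mem_support_of_mem_edges he
  calc c.length = c.edges.toFinset.card := (cycle_card_edges G hc).symm
    _ ≤ _ := Finset.card_le_card hsub

lemma incidentEdgeCount_eq (S : Finset V) :
    {e ∈ G.edgeSet | ∃ v ∈ S, v ∈ e}.ncard
      = (G.edgeFinset.filter (fun e => ∃ v ∈ S, v ∈ e)).card := by
  rw [← Set.ncard_coe_finset]
  congr 1
  ext e
  simp [mem_edgeFinset]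

lemma key_count (S : Finset V) :
    (G.edgeFinset.filter (fun e => ∃ v ∈ S, v ∈ e)).card + (insideF G S).card
      = ∑ v ∈ S, G.degree v := by
  have hdeg : ∀ v, G.degree v = ∑ e ∈ G.edgeFinset, if v ∈ e then 1 else 0 := by
    intro v
    rw [← Finset.card_filter, ← incidenceFinset_eq_filter, card_incidenceFinset_eq_degree]
  calc (G.edgeFinset.filter (fun e => ∃ v ∈ S, v ∈ e)).card + (insideF G S).card
      = ∑ e ∈ G.edgeFinset, ((if ∃ v ∈ S, v ∈ e then 1 else 0) + if ∀ v ∈ e, v ∈ S then 1 else 0) := by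
        rw [Finset.sum_add_distrib]
        unfold insideF
        rw [← Finset.card_filter, ← Finset.card_filter]
    _ = ∑ e ∈ G.edgeFinset, (S.filter (fun v => v ∈ e)).card := by
        apply Finset.sum_congr rfl
        intro e he
        induction e with
        | _ a b =>
          have hab : G.Adj a b := mem_edgeFinset.mp he
          have h1 : (∃ v ∈ S, v ∈ s(a,b)) ↔ (a ∈ S ∨ b ∈ S) := by
            constructor
            · rintro ⟨v, hv, hmem⟩
              rcases Sym2.mem_iff.mp hmem with rfl | rfl
              · exact Or.inl hv
              · exact Or.inr hv
            · rintro (h | h)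
              · exact ⟨a, h, by simp⟩
              · exact ⟨b, h, by simp⟩
          have h2 : (∀ v ∈ s(a,b), v ∈ S) ↔ (a ∈ S ∧ b ∈ S) := by
            constructor
            · intro h; exact ⟨h a (by simp), h b (by simp)⟩
            · rintro ⟨h1, h2⟩ v hv
              rcases Sym2.mem_iff.mp hv with rfl | rfl <;> assumption
          have h3 : S.filter (fun v => v ∈ s(a,b)) = S.filter (fun v => v = a ∨ v = b) := by
            apply Finset.filter_congr; intro x _; simp [Sym2.mem_iff]
          rw [h3, if_congr h1 rfl rfl, if_congr h2 rfl rfl]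
          by_cases ha : a ∈ S <;> by_cases hb : b ∈ S
          · have : S.filter (fun v => v = a ∨ v = b) = {a, b} := by
              ext x; simp only [Finset.mem_filter, Finset.mem_insert, Finset.mem_singleton]
              constructor
              · rintro ⟨_, h⟩; exact h
              · rintro (rfl | rfl) <;> simp [ha, hb]
            rw [this, Finset.card_pair hab.ne]
            simp [ha, hb]
          · have : S.filter (fun v => v = a ∨ v = b) = {a} := by
              ext x; simp only [Finset.mem_filter, Finset.mem_singleton]
              constructor
              · rintro ⟨hx, rfl | rfl⟩
                · rfl
                · exact absurd hx hb
              · rintro rfl; simp [ha]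
            rw [this, Finset.card_singleton]
            simp [ha, hb]
          · have : S.filter (fun v => v = a ∨ v = b) = {b} := by
              ext x; simp only [Finset.mem_filter, Finset.mem_singleton]
              constructor
              · rintro ⟨hx, rfl | rfl⟩
                · exact absurd hx ha
                · rfl
              · rintro rfl; simp [hb]
            rw [this, Finset.card_singleton]
            simp [ha, hb]
          · have : S.filter (fun v => v = a ∨ v = b) = ∅ := by
              ext x; simp only [Finset.mem_filter, Finset.notMem_empty, iff_false]
              rintro ⟨hx, rfl | rfl⟩
              · exact ha hx
              · exact hb hx
            rw [this, Finset.card_empty]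
            simp [ha, hb]
    _ = ∑ v ∈ S, ∑ e ∈ G.edgeFinset, if v ∈ e then 1 else 0 := by
        simp_rw [Finset.card_filter]
        rw [Finset.sum_comm]
    _ = ∑ v ∈ S, G.degree v := by simp_rw [← hdeg]


end FRC


open FRC Finset in
theorem stmt8 {V : Type*} [Fintype V] (G : SimpleGraph V) [DecidableRel G.Adj]
    (α g k : ℕ) (hreg : G.IsRegularOfDegree α) (hg : G.egirth = (g : ℕ∞))
    (hk1 : 1 ≤ k) (hk : k ≤ α) :
    (k ≤ g - 1 → fileSize G k = k * α - k + 1) ∧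
    (g ≤ k → k ≤ g + (g + 1) / 2 - 2 → fileSize G k = k * α - k) := by
  classical
  -- girth facts
  have hnetop : G.egirth ≠ ⊤ := by rw [hg]; exact ENat.coe_ne_top g
  have hnac : ¬ G.IsAcyclic := fun hac => hnetop hac.egirth_eq_top
  obtain ⟨a0, w0, hw0, hw0len⟩ := (exists_egirth_eq_length (G := G)).mpr hnac
  have hw0len' : w0.length = g := by
    rw [hg] at hw0len
    exact_mod_cast hw0len.symm
  have hg3 : 3 ≤ g := by
    have h3 := G.three_le_egirth
    rw [hg] at h3
    exact_mod_cast h3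
  have hgirth : ∀ (u : V) (c : G.Walk u u), c.IsCycle → g ≤ c.length := by
    intro u c hc
    have h := le_egirth.mp (le_of_eq hg.symm) u c hc
    exact_mod_cast h
  have hα : 1 ≤ α := le_trans hk1 hk
  -- the counting formula
  have hformula : ∀ S : Finset V,
      incidentEdgeCount G S + (insideF G S).card = S.card * α := by
    intro S
    rw [incidentEdgeCount, incidentEdgeCount_eq G S, key_count G S]
    rw [Finset.sum_congr rfl (fun v _ => hreg v), Finset.sum_const, smul_eq_mul]
  -- reduction of fileSize to the max inside count
  have compute : ∀ t : ℕ, (∀ S : Finset V, S.card = k → (insideF G S).card ≤ t) →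
      (∃ S : Finset V, S.card = k ∧ t ≤ (insideF G S).card) →
      fileSize G k = k * α - t := by
    rintro t hub ⟨S0, hS0, hins⟩
    have hf0 := hformula S0
    rw [hS0] at hf0
    have hS0t : (insideF G S0).card = t := le_antisymm (hub S0 hS0) hins
    have hmem : k * α - t ∈ {m | ∃ S : Finset V, S.card = k ∧ m = incidentEdgeCount G S} :=
      ⟨S0, hS0, by omega⟩
    rw [fileSize]
    apply le_antisymm
    · exact Nat.sInf_le hmem
    · apply le_csInf ⟨_, hmem⟩
      rintro m ⟨S, hS, rfl⟩
      have hf := hformula S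
      rw [hS] at hf
      have := hub S hS
      omega
  constructor
  · -- first regime : k ≤ g - 1
    intro hkg
    have hub : ∀ S : Finset V, S.card = k → (insideF G S).card ≤ k - 1 := by
      intro S hS
      have := inside_lt_of_lt_girth G hgirth (by omega : 1 ≤ S.card)
        (by omega : S.card < g)
      omega
    obtain ⟨S', _, hcard', hins'⟩ := growth G hreg (k - 1) {a0} ⟨a0, by simp⟩
      (by rw [Finset.card_singleton]; omega)
    rw [Finset.card_singleton] at hcard'
    have hres := compute (k - 1) hub ⟨S', by omega, by omega⟩
    have hkα : k * 1 ≤ k * α := Nat.mul_le_mul_left k hα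
    rw [hres]
    omega
  · -- second regime
    intro hgk hkb
    have hub : ∀ S : Finset V, S.card = k → (insideF G S).card ≤ k := by
      intro S hS
      by_contra h
      push_neg at h
      have h3g := three_mul_girth_le G hgirth (by omega : 1 ≤ S.card)
        (by omega : S.card + 1 ≤ (insideF G S).card)
      rw [hS] at h3g
      omega
    obtain ⟨hc0, hi0⟩ := cycle_start_set G hw0
    rw [hw0len'] at hc0 hi0
    obtain ⟨S', _, hcard', hins'⟩ := growth G hreg (k - g) w0.support.tail.toFinset
      (Finset.card_pos.mp (by omega)) (by omega)
    exact compute k hub ⟨S', by omega, by omega⟩ ▸ rfl
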